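/- Under trading-post bid dynamics ḃ_{nk} = b_{nk}(F_{nk}(x) − p_k) with p_k = ∑_m b_{mk} and x_{nk} = b_{nk}/p_k, the induced allocation shares satisfy the replicator equation ẋ_{nk} = x_{nk}[F_{nk}(x) − ∑_m F_{mk}(x) x_{mk}], provided p_k > 0. -/

import Mathlib

/-- Under trading-post bid dynamics ḃ_{nk} = b_{nk}(F_{nk}(x) − p_k) with
p_k = ∑_m b_{mk} and shares x_{nk} = b_{nk}/p_k, the shares follow the replicator
equation ẋ_{nk} = x_{nk}[F_{nk}(x) − ∑_m F_{mk}(x) x_{mk}], provided p_k > 0. -/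
theorem trading_post_induces_replicator
    {N : ℕ} (b : ℝ → Fin N → ℝ) (F : (Fin N → ℝ) → Fin N → ℝ) (s₀ : ℝ)
    (hbpos : ∀ n, 0 < b s₀ n)
    (hb : ∀ n, HasDerivAt (fun s => b s n)
      (b s₀ n * (F (fun m => b s₀ m / ∑ m', b s₀ m') n - ∑ m', b s₀ m')) s₀) :
    ∀ n, HasDerivAt (fun s => b s n / ∑ m', b s m')
      ((b s₀ n / ∑ m', b s₀ m') *
        (F (fun m => b s₀ m / ∑ m', b s₀ m') n -
          ∑ m, F (fun m' => b s₀ m' / ∑ m'', b s₀ m'') m *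
            (b s₀ m / ∑ m', b s₀ m'))) s₀ := by
  intro n
  set p : ℝ := ∑ m', b s₀ m' with hp
  have hppos : 0 < p := Finset.sum_pos (fun m _ => hbpos m) ⟨n, Finset.mem_univ n⟩
  have hpne : p ≠ 0 := hppos.ne'
  set G : Fin N → ℝ := F (fun m => b s₀ m / p) with hG
  have hsum : HasDerivAt (fun s => ∑ m', b s m')
      (∑ m', b s₀ m' * (G m' - p)) s₀ := by
    have := HasDerivAt.fun_sum (u := Finset.univ)
      (fun m _ => (hb m : HasDerivAt (fun s => b s m) (b s₀ m * (G m - p)) s₀))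
    simpa using this
  have hdiv : HasDerivAt (fun s => b s n / ∑ m', b s m') _ s₀ := (hb n).div hsum hpne
  convert hdiv using 1
  field_simp
  rw [← hp, ← Finset.sum_div]
  have hexp : ∑ m' : Fin N, b s₀ m' * (G m' - p) = (∑ m', G m' * b s₀ m') - p * p := by
    simp [mul_sub, Finset.sum_sub_distrib, ← Finset.sum_mul, ← hp, mul_comm]
  rw [hexp]
  field_simp
  ring
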